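/- Let C₁ = {(0,0,x₃) : x₃ ∈ [−1,1]} and C₂ = {(x₁, x₂, 0) : x₁² + (x₂−1)² = 1, x₁ ≥ 0} in ℝ³, and let C be the closed convex hull of C₁ ∪ C₂. For every x in the open set K = {x : x₁ > 0, x₂ < 0, |x₃| < √(x₁²+x₂²) + x₂}, the support function satisfies σ_C(x) = √(x₁² + x₂²) + x₂. -/

import Mathlib

open scoped RealInnerProductSpace

/-- The segment `C₁ = {(0,0,x₃) : x₃ ∈ [−1,1]}`. -/
def segC1 : Set (EuclideanSpace ℝ (Fin 3)) :=
  {p | p 0 = 0 ∧ p 1 = 0 ∧ p 2 ∈ Set.Icc (-1 : ℝ) 1}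

/-- The circular arc `C₂ = {(x₁,x₂,0) : x₁² + (x₂−1)² = 1, x₁ ≥ 0}`. -/
def arcC2 : Set (EuclideanSpace ℝ (Fin 3)) :=
  {p | (p 0) ^ 2 + (p 1 - 1) ^ 2 = 1 ∧ 0 ≤ p 0 ∧ p 2 = 0}

/-- for `C` the closed convex hull of `C₁ ∪ C₂` and any `x` with `x₁ > 0`,
`x₂ < 0`, `|x₃| < √(x₁²+x₂²) + x₂`, the support function of `C` at `x` equals
`√(x₁²+x₂²) + x₂`. -/
theorem stmt_11 (x : EuclideanSpace ℝ (Fin 3))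
    (h1 : 0 < x 0) (h2 : x 1 < 0)
    (h3 : |x 2| < Real.sqrt ((x 0) ^ 2 + (x 1) ^ 2) + x 1) :
    sSup ((fun c => ⟪x, c⟫) '' closure (convexHull ℝ (segC1 ∪ arcC2)))
      = Real.sqrt ((x 0) ^ 2 + (x 1) ^ 2) + x 1 := by
  set r : ℝ := Real.sqrt ((x 0) ^ 2 + (x 1) ^ 2) with hr
  have hr2 : r ^ 2 = (x 0) ^ 2 + (x 1) ^ 2 :=
    Real.sq_sqrt (by positivity)
  have hrpos : 0 < r := by
    rw [hr]
    apply Real.sqrt_pos.2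
    positivity
  set M : ℝ := r + x 1 with hM
  -- The halfspace
  have hconv : Convex ℝ {c : EuclideanSpace ℝ (Fin 3) | ⟪x, c⟫ ≤ M} :=
    convex_halfSpace_le ⟨fun a b => inner_add_right x a b,
      fun t a => real_inner_smul_right x a t⟩ M
  have hclosed : IsClosed {c : EuclideanSpace ℝ (Fin 3) | ⟪x, c⟫ ≤ M} :=
    isClosed_le (Continuous.inner continuous_const continuous_id) continuous_const
  have hsub : segC1 ∪ arcC2 ⊆ {c : EuclideanSpace ℝ (Fin 3) | ⟪x, c⟫ ≤ M} := by
    rintro p (⟨hp0, hp1, hp2l, hp2r⟩ | ⟨hcirc, hpos, hp2⟩)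
    · simp only [Set.mem_setOf_eq, PiLp.inner_apply, RCLike.inner_apply, Fin.sum_univ_three,
        hp0, hp1, conj_trivial]
      have habs : |x 2 * p 2| ≤ |x 2| := by
        rw [abs_mul]
        calc |x 2| * |p 2| ≤ |x 2| * 1 := by
              apply mul_le_mul_of_nonneg_left _ (abs_nonneg _)
              exact abs_le.2 ⟨hp2l, hp2r⟩
          _ = |x 2| := mul_one _
      have := le_abs_self (x 2 * p 2)
      linarith
    · simp only [Set.mem_setOf_eq, PiLp.inner_apply, RCLike.inner_apply, Fin.sum_univ_three,
        hp2, conj_trivial]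
      have key : x 0 * p 0 + x 1 * (p 1 - 1) ≤ r := by
        nlinarith [sq_nonneg (x 0 * (p 1 - 1) - x 1 * p 0), hrpos.le,
          sq_nonneg (r - (x 0 * p 0 + x 1 * (p 1 - 1))),
          sq_nonneg (r + (x 0 * p 0 + x 1 * (p 1 - 1)))]
      rw [hM]
      linarith
  apply IsGreatest.csSup_eq
  constructor
  · -- M is attained at c* = (x0/r, 1 + x1/r, 0)
    refine ⟨(WithLp.toLp 2 (fun i => ![x 0 / r, 1 + x 1 / r, 0] i) : EuclideanSpace ℝ (Fin 3)), ?_, ?_⟩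
    · apply subset_closure
      apply subset_convexHull
      right
      refine ⟨?_, ?_, ?_⟩
      · show (x 0 / r) ^ 2 + ((1 + x 1 / r) - 1) ^ 2 = 1
        field_simp
        linarith [hr2]
      · show (0:ℝ) ≤ x 0 / r
        positivity
      · rfl
    · show ⟪x, _⟫ = M
      simp only [PiLp.inner_apply, RCLike.inner_apply, Fin.sum_univ_three, conj_trivial]
      show (x 0 / r) * x 0 + (1 + x 1 / r) * x 1 + 0 * x 2 = M
      rw [hM]
      field_simp
      nlinarith [hr2]
  · rintro y ⟨c, hc, rfl⟩
    have : c ∈ {c : EuclideanSpace ℝ (Fin 3) | ⟪x, c⟫ ≤ M} :=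
      closure_minimal (convexHull_min hsub hconv) hclosed hc
    exact this
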